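/- The polynomial p(x) = 2x⁴ − 5x³ − 7x² + 10x + 8 is irreducible over ℚ, and for any root α of p in ℂ, the quartic number field ℚ(α) is a Galois extension of ℚ whose Galois group is cyclic of order 4; i.e. ℚ(α) is a cyclic quartic number field. -/

import Mathlib

open Polynomial
open scoped IntermediateField

theorem monic_quad_form {F : Type*} [Field F] (g : F[X]) (hm : g.Monic) (hd : g.natDegree = 2) :
    g = X^2 + C (g.coeff 1) * X + C (g.coeff 0) := by
  have h3 : g.natDegree < 3 := by omega
  have hc2 : g.coeff 2 = 1 := by
    have := hm.coeff_natDegree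
    rwa [hd] at this
  conv_lhs => rw [g.as_sum_range' 3 h3]
  simp only [Finset.sum_range_succ, Finset.sum_range_zero, zero_add,
    ← C_mul_X_pow_eq_monomial, hc2, map_one]
  ring

theorem root_of_natDegree_one {F : Type*} [Field F] (g : F[X]) (hd : g.natDegree = 1) :
    ∃ x : F, g.eval x = 0 := by
  have hg0 : g ≠ 0 := fun h => by simp [h] at hd
  have hc1 : g.coeff 1 ≠ 0 := by
    have := mt leadingCoeff_eq_zero.mp hg0
    rwa [leadingCoeff, hd] at this
  refine ⟨-(g.coeff 0) / (g.coeff 1), ?_⟩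
  rw [g.eq_X_add_C_of_natDegree_le_one (le_of_eq hd)]
  simp
  field_simp
  ring

theorem irred_quartic {F : Type*} [Field F] (f : F[X]) (hm : f.Monic) (hdeg : f.natDegree = 4)
    (h1 : ∀ x : F, f.eval x ≠ 0)
    (h2 : ∀ a b c d : F, f ≠ (X^2 + C a * X + C b) * (X^2 + C c * X + C d)) :
    Irreducible f := by
  rw [irreducible_iff]
  constructor
  · intro hu
    have := natDegree_eq_zero_of_isUnit hu
    omega
  · intro u v huv
    by_contra hcon
    push_neg at hcon
    obtain ⟨hu, hv⟩ := hcon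
    have hu0 : u ≠ 0 := by intro h; rw [h, zero_mul] at huv; exact hm.ne_zero huv
    have hv0 : v ≠ 0 := by intro h; rw [h, mul_zero] at huv; exact hm.ne_zero huv
    have hsum : u.natDegree + v.natDegree = 4 := by
      rw [← natDegree_mul hu0 hv0, ← huv, hdeg]
    have hun : u.natDegree ≠ 0 := by
      intro h
      apply hu
      rw [eq_C_of_natDegree_eq_zero h]
      exact isUnit_C.mpr (isUnit_iff_ne_zero.mpr
        (fun hc => hu0 (by rw [eq_C_of_natDegree_eq_zero h, hc, map_zero])))
    have hvn : v.natDegree ≠ 0 := by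
      intro h
      apply hv
      rw [eq_C_of_natDegree_eq_zero h]
      exact isUnit_C.mpr (isUnit_iff_ne_zero.mpr
        (fun hc => hv0 (by rw [eq_C_of_natDegree_eq_zero h, hc, map_zero])))
    -- rule out odd-degree factor: some factor of degree 1
    have hroot : ∀ g : F[X], g.natDegree = 1 → (∃ w : F[X], f = g * w) → False := by
      rintro g hg ⟨w, hw⟩
      obtain ⟨x, hx⟩ := root_of_natDegree_one g hg
      exact h1 x (by rw [hw, eval_mul, hx, zero_mul])
    have hub : u.natDegree ≤ 3 := by omega
    have hlb : 1 ≤ u.natDegree := Nat.pos_of_ne_zero hun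
    interval_cases hcase : u.natDegree
    · exact hroot u hcase ⟨v, huv⟩
    · -- both quadratic
      have hv2 : v.natDegree = 2 := by omega
      have hlc : u.leadingCoeff * v.leadingCoeff = 1 := by
        rw [← leadingCoeff_mul, ← huv]; exact hm
      set g1 := C v.leadingCoeff * u with hg1
      set g2 := C u.leadingCoeff * v with hg2
      have hg1m : g1.Monic := by
        rw [Monic, hg1, leadingCoeff_mul, leadingCoeff_C, mul_comm]
        exact hlc
      have hg2m : g2.Monic := by
        rw [Monic, hg2, leadingCoeff_mul, leadingCoeff_C]
        exact hlc
      have hg1d : g1.natDegree = 2 := by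
        rw [hg1, natDegree_C_mul (leadingCoeff_ne_zero.mpr hv0), hcase]
      have hg2d : g2.natDegree = 2 := by
        rw [hg2, natDegree_C_mul (leadingCoeff_ne_zero.mpr hu0), hv2]
      have hfact : f = g1 * g2 := by
        rw [hg1, hg2, huv]
        rw [mul_comm (C v.leadingCoeff) u, mul_assoc, ← mul_assoc (C v.leadingCoeff),
          ← C_mul, mul_comm v.leadingCoeff, hlc, map_one, one_mul]
      exact h2 (g1.coeff 1) (g1.coeff 0) (g2.coeff 1) (g2.coeff 0)
        (hfact.trans (congrArg₂ (· * ·) (monic_quad_form g1 hg1m hg1d)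
          (monic_quad_form g2 hg2m hg2d)))
    · exact hroot v (by omega) ⟨u, by rw [huv, mul_comm]⟩

theorem irred_q3 : Irreducible (X^4+X^3+X^2+X+1 : (ZMod 3)[X]) := by
  apply irred_quartic
  · monicity!
  · compute_degree!
  · intro x
    simp only [eval_add, eval_pow, eval_X, eval_one]
    revert x; decide
  · intro a b c d h
    have expand : (X^2+C a*X+C b)*(X^2+C c*X+C d)
        = X^4 + C (a+c) * X^3 + C (b+d+a*c) * X^2 + C (a*d+b*c) * X + C (b*d) := by
      simp only [C_add, C_mul]; ring
    rw [expand] at h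
    have h0 := congrArg (fun f => coeff f 0) h
    have h1 := congrArg (fun f => coeff f 1) h
    have h2 := congrArg (fun f => coeff f 2) h
    have h3 := congrArg (fun f => coeff f 3) h
    simp only [coeff_add, coeff_C_mul, coeff_X_pow, coeff_C, coeff_X, coeff_one] at h0 h1 h2 h3
    norm_num at h0 h1 h2 h3
    clear h expand
    revert h0 h1 h2 h3; revert a b c d
    decide

theorem irred_qZ : Irreducible (X^4 - 5*X^3 - 14*X^2 + 40*X + 64 : ℤ[X]) := by
  have hmap : (X^4 - 5*X^3 - 14*X^2 + 40*X + 64 : ℤ[X]).map (Int.castRingHom (ZMod 3))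
      = X^4+X^3+X^2+X+1 := by
    simp only [Polynomial.map_add, Polynomial.map_sub, Polynomial.map_mul, Polynomial.map_pow,
      Polynomial.map_X, Polynomial.map_ofNat]
    have h3 : (3 : (ZMod 3)[X]) = 0 := CharP.cast_eq_zero _ 3
    linear_combination (-2*X^3 - 5*X^2 + 13*X + 21) * h3
  have hmonic : (X^4 - 5*X^3 - 14*X^2 + 40*X + 64 : ℤ[X]).Monic := by monicity!
  apply hmonic.irreducible_of_irreducible_map (Int.castRingHom (ZMod 3))
  rw [hmap]
  exact irred_q3

theorem irred_qQ : Irreducible (X^4 - 5*X^3 - 14*X^2 + 40*X + 64 : ℚ[X]) := by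
  have hmonic : (X^4 - 5*X^3 - 14*X^2 + 40*X + 64 : ℤ[X]).Monic := by monicity!
  have := (hmonic.irreducible_iff_irreducible_map_fraction_map (K := ℚ)).mp irred_qZ
  convert this using 1
  simp only [Polynomial.map_add, Polynomial.map_sub, Polynomial.map_mul, Polynomial.map_pow,
    Polynomial.map_X, Polynomial.map_ofNat]

set_option maxHeartbeats 1000000 in
set_option synthInstance.maxHeartbeats 400000 in
/-- The polynomial `p(x) = 2x⁴ - 5x³ - 7x² + 10x + 8` is irreducible over
`ℚ`, and for any root `α ∈ ℂ` of `p`, the quartic number field `ℚ(α)` is a Galois extension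
of `ℚ` whose Galois group is cyclic of order `4`; i.e. `ℚ(α)` is a cyclic quartic number
field. -/
theorem cyclic_quartic_field_alpha
    (p : ℚ[X]) (hp : p = 2 * X ^ 4 - 5 * X ^ 3 - 7 * X ^ 2 + 10 * X + 8) :
    Irreducible p ∧
    ∀ α : ℂ, aeval α p = 0 →
      Module.finrank ℚ ℚ⟮α⟯ = 4 ∧
      IsGalois ℚ ℚ⟮α⟯ ∧
      IsCyclic (ℚ⟮α⟯ ≃ₐ[ℚ] ℚ⟮α⟯) ∧
      Nat.card (ℚ⟮α⟯ ≃ₐ[ℚ] ℚ⟮α⟯) = 4 := by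
  have hirr : Irreducible p := by
    have hqmon : (X^4 - 5*X^3 - 14*X^2 + 40*X + 64 : ℚ[X]).Monic := by monicity!
    have hqdeg : (X^4 - 5*X^3 - 14*X^2 + 40*X + 64 : ℚ[X]).natDegree = 4 := by compute_degree!
    have hpdeg : p.natDegree = 4 := by rw [hp]; compute_degree!
    have hpne : p ≠ 0 := fun h => by simp [h] at hpdeg
    have key : ∀ α : ℂ, aeval α p = 0 → Module.finrank ℚ ℚ⟮α⟯ = 4 := by
      intro α hroot
      have pa : 2*α^4 - 5*α^3 - 7*α^2 + 10*α + 8 = 0 := by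
        have h := hroot
        rw [hp] at h
        simp only [map_add, map_sub, map_mul, map_pow, aeval_X, map_ofNat] at h
        linear_combination h
      have hβ : aeval (2*α) (X^4 - 5*X^3 - 14*X^2 + 40*X + 64 : ℚ[X]) = 0 := by
        simp only [map_add, map_sub, map_mul, map_pow, aeval_X, map_ofNat]
        linear_combination (8:ℂ) * pa
      have hint2 : IsIntegral ℚ (2*α) := ⟨_, hqmon, hβ⟩
      have hmin2 : minpoly ℚ (2*α) = X^4 - 5*X^3 - 14*X^2 + 40*X + 64 :=
        (minpoly.eq_of_irreducible_of_monic irred_qQ hβ hqmon).symm ▸ rfl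
      have heq : ℚ⟮α⟯ = ℚ⟮2*α⟯ := by
        apply le_antisymm
        · rw [IntermediateField.adjoin_simple_le_iff]
          have h2 : (2*α) ∈ ℚ⟮2*α⟯ := IntermediateField.mem_adjoin_simple_self ℚ (2*α)
          have h2C : (2:ℂ) ∈ ℚ⟮2*α⟯ := by
            have := ℚ⟮2*α⟯.algebraMap_mem (2:ℚ)
            simpa using this
          have hm : (2:ℂ)⁻¹ * (2*α) ∈ ℚ⟮2*α⟯ := mul_mem (inv_mem h2C) h2
          have hre : (2:ℂ)⁻¹ * (2*α) = α := by ring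
          rwa [hre] at hm
        · rw [IntermediateField.adjoin_simple_le_iff]
          have h1 : α ∈ ℚ⟮α⟯ := IntermediateField.mem_adjoin_simple_self ℚ α
          have h2C : (2:ℂ) ∈ ℚ⟮α⟯ := by
            have := ℚ⟮α⟯.algebraMap_mem (2:ℚ)
            simpa using this
          exact mul_mem h2C h1
      rw [heq, IntermediateField.adjoin.finrank hint2, hmin2, hqdeg]
    -- now irreducibility
    have hdegmap : (p.map (algebraMap ℚ ℂ)).degree ≠ 0 := by
      rw [degree_map_eq_of_injective (algebraMap ℚ ℂ).injective, degree_eq_natDegree hpne, hpdeg]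
      norm_num
    obtain ⟨α₀, hα₀⟩ := IsAlgClosed.exists_root _ hdegmap
    have hroot : aeval α₀ p = 0 := by
      rwa [IsRoot.def, eval_map, ← aeval_def] at hα₀
    have hint : IsIntegral ℚ α₀ := by
      refine ⟨C 2⁻¹ * p, ?_, ?_⟩
      · rw [Monic, leadingCoeff, natDegree_C_mul (by norm_num : (2⁻¹:ℚ) ≠ 0), hpdeg,
          coeff_C_mul]
        have : p.coeff 4 = 2 := by rw [hp]; compute_degree!
        rw [this]; norm_num
      · rw [← aeval_def, map_mul, hroot, mul_zero]
    have hmindeg : (minpoly ℚ α₀).natDegree = 4 := by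
      rw [← IntermediateField.adjoin.finrank hint, key α₀ hroot]
    obtain ⟨c, hc⟩ := minpoly.dvd ℚ α₀ hroot
    have hmne : minpoly ℚ α₀ ≠ 0 := minpoly.ne_zero hint
    have hcne : c ≠ 0 := fun h => hpne (by rw [hc, h, mul_zero])
    have hcdeg : c.natDegree = 0 := by
      have := natDegree_mul hmne hcne
      rw [← hc, hpdeg, hmindeg] at this
      omega
    have hcu : IsUnit c := by
      rw [eq_C_of_natDegree_eq_zero hcdeg]
      exact isUnit_C.mpr (isUnit_iff_ne_zero.mpr
        (fun h => hcne (by rw [eq_C_of_natDegree_eq_zero hcdeg, h, map_zero])))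
    have hassoc : Associated (minpoly ℚ α₀) p := by
      rw [hc]
      exact associated_mul_unit_right _ _ hcu
    exact hassoc.irreducible (minpoly.irreducible hint)
  refine ⟨hirr, fun α hroot => ?_⟩
  have hpdeg : p.natDegree = 4 := by rw [hp]; compute_degree!
  have hpne : p ≠ 0 := fun h => by simp [h] at hpdeg
  have hfr : Module.finrank ℚ ℚ⟮α⟯ = 4 := by
    have pa : 2*α^4 - 5*α^3 - 7*α^2 + 10*α + 8 = 0 := by
      have h := hroot
      rw [hp] at h
      simp only [map_add, map_sub, map_mul, map_pow, aeval_X, map_ofNat] at h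
      linear_combination h
    have hqmon : (X^4 - 5*X^3 - 14*X^2 + 40*X + 64 : ℚ[X]).Monic := by monicity!
    have hqdeg : (X^4 - 5*X^3 - 14*X^2 + 40*X + 64 : ℚ[X]).natDegree = 4 := by compute_degree!
    have hβ : aeval (2*α) (X^4 - 5*X^3 - 14*X^2 + 40*X + 64 : ℚ[X]) = 0 := by
      simp only [map_add, map_sub, map_mul, map_pow, aeval_X, map_ofNat]
      linear_combination (8:ℂ) * pa
    have hint2 : IsIntegral ℚ (2*α) := ⟨_, hqmon, hβ⟩
    have hmin2 : minpoly ℚ (2*α) = X^4 - 5*X^3 - 14*X^2 + 40*X + 64 :=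
      (minpoly.eq_of_irreducible_of_monic irred_qQ hβ hqmon).symm ▸ rfl
    have heq : ℚ⟮α⟯ = ℚ⟮2*α⟯ := by
      apply le_antisymm
      · rw [IntermediateField.adjoin_simple_le_iff]
        have h2 : (2*α) ∈ ℚ⟮2*α⟯ := IntermediateField.mem_adjoin_simple_self ℚ (2*α)
        have h2C : (2:ℂ) ∈ ℚ⟮2*α⟯ := by
          have := ℚ⟮2*α⟯.algebraMap_mem (2:ℚ)
          simpa using this
        have hm : (2:ℂ)⁻¹ * (2*α) ∈ ℚ⟮2*α⟯ := mul_mem (inv_mem h2C) h2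
        have hre : (2:ℂ)⁻¹ * (2*α) = α := by ring
        rwa [hre] at hm
      · rw [IntermediateField.adjoin_simple_le_iff]
        have h1 : α ∈ ℚ⟮α⟯ := IntermediateField.mem_adjoin_simple_self ℚ α
        have h2C : (2:ℂ) ∈ ℚ⟮α⟯ := by
          have := ℚ⟮α⟯.algebraMap_mem (2:ℚ)
          simpa using this
        exact mul_mem h2C h1
    rw [heq, IntermediateField.adjoin.finrank hint2, hmin2, hqdeg]
  -- basic data
  have pa : 2*α^4 - 5*α^3 - 7*α^2 + 10*α + 8 = 0 := by
    have h := hroot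
    rw [hp] at h
    simp only [map_add, map_sub, map_mul, map_pow, aeval_X, map_ofNat] at h
    linear_combination h
  have hmon2 : (C 2⁻¹ * p).Monic := by
    rw [Monic, leadingCoeff, natDegree_C_mul (by norm_num : (2⁻¹:ℚ) ≠ 0), hpdeg, coeff_C_mul]
    have : p.coeff 4 = 2 := by rw [hp]; compute_degree!
    rw [this]; norm_num
  have haev2 : aeval α (C 2⁻¹ * p) = 0 := by rw [map_mul, hroot, mul_zero]
  have hint : IsIntegral ℚ α := ⟨C 2⁻¹ * p, hmon2, by rwa [← aeval_def]⟩
  have hirr2 : Irreducible (C 2⁻¹ * p) := by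
    have hassoc : Associated p (C 2⁻¹ * p) :=
      ⟨Units.mkOfMulEqOne (C 2⁻¹) (C 2) (by rw [← C_mul]; norm_num), mul_comm p (C 2⁻¹)⟩
    exact hassoc.irreducible hirr
  have hmin : minpoly ℚ α = C 2⁻¹ * p :=
    (minpoly.eq_of_irreducible_of_monic hirr2 haev2 hmon2).symm ▸ rfl
  have hd4 : (minpoly ℚ α).natDegree = 4 := by
    rw [hmin, natDegree_C_mul (by norm_num : (2⁻¹:ℚ) ≠ 0), hpdeg]
  -- cubic non-vanishing helper
  have hcube : ∀ r : ℚ[X], r.natDegree = 3 → aeval α r ≠ 0 := by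
    intro r hr3 hr
    have hrne : r ≠ 0 := fun h => by simp [h] at hr3
    have hdvd := minpoly.dvd ℚ α hr
    have := natDegree_le_natDegree (degree_le_of_dvd hdvd hrne)
    omega
  -- the generator
  set a : ℚ⟮α⟯ := IntermediateField.AdjoinSimple.gen ℚ α with ha
  have haK : algebraMap ℚ⟮α⟯ ℂ a = α := IntermediateField.AdjoinSimple.algebraMap_gen ℚ α
  have haC : (a : ℂ) = α := IntermediateField.AdjoinSimple.coe_gen ℚ α
  have hKinj : Function.Injective (algebraMap ℚ⟮α⟯ ℂ) := (algebraMap ℚ⟮α⟯ ℂ).injective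
  have paK : 2*a^4 - 5*a^3 - 7*a^2 + 10*a + 8 = 0 := by
    apply hKinj
    simp only [map_add, map_sub, map_mul, map_pow, map_ofNat, map_zero, haK]
    linear_combination pa
  -- roots in K
  set b : ℚ⟮α⟯ := (-12 - 3*a + 9*a^2 - 2*a^3)/4 with hb
  set c : ℚ⟮α⟯ := (10 - 7*a - 5*a^2 + 2*a^3)/4 with hc
  set d : ℚ⟮α⟯ := (6 + 3*a - 2*a^2)/2 with hd
  -- Normal
  have hKeq : ℚ⟮α⟯ = IntermediateField.adjoin ℚ (p.rootSet ℂ) := by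
    apply le_antisymm
    · rw [IntermediateField.adjoin_simple_le_iff]
      exact IntermediateField.subset_adjoin ℚ _ (by
        rw [mem_rootSet]; exact ⟨hpne, hroot⟩)
    · rw [IntermediateField.adjoin_le_iff]
      intro z hz
      rw [mem_rootSet] at hz
      have pz : 2*z^4 - 5*z^3 - 7*z^2 + 10*z + 8 = 0 := by
        have h := hz.2
        rw [hp] at h
        simp only [map_add, map_sub, map_mul, map_pow, aeval_X, map_ofNat] at h
        linear_combination h
      have hfac : (z - α) * ((4*z - (-12 - 3*α + 9*α^2 - 2*α^3))
          * ((4*z - (10 - 7*α - 5*α^2 + 2*α^3)) * (2*z - (6 + 3*α - 2*α^2)))) = 0 := by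
        linear_combination (16:ℂ) * pz - ((16 - 70*z + 22*z^2) + (70 + 47*z - 18*z^2)*α
          + (-69 + 39*z + 4*z^2)*α^2 + (-21 - 28*z)*α^3 + (24 + 4*z)*α^4 - 4*α^5) * pa
      have hαm : α ∈ ℚ⟮α⟯ := IntermediateField.mem_adjoin_simple_self ℚ α
      rcases mul_eq_zero.mp hfac with h1 | h1
      · have : z = α := by linear_combination h1
        rw [this]; exact hαm
      rcases mul_eq_zero.mp h1 with h2 | h2
      · have : z = algebraMap ℚ⟮α⟯ ℂ b := by
          rw [hb]
          simp only [map_div₀, map_sub, map_add, map_neg, map_mul, map_pow, map_ofNat, haK]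
          linear_combination (4:ℂ)⁻¹ * h2
        rw [this]; exact b.2
      rcases mul_eq_zero.mp h2 with h3 | h3
      · have : z = algebraMap ℚ⟮α⟯ ℂ c := by
          rw [hc]
          simp only [map_div₀, map_sub, map_add, map_neg, map_mul, map_pow, map_ofNat, haK]
          linear_combination (4:ℂ)⁻¹ * h3
        rw [this]; exact c.2
      · have : z = algebraMap ℚ⟮α⟯ ℂ d := by
          rw [hd]
          simp only [map_div₀, map_sub, map_add, map_neg, map_mul, map_pow, map_ofNat, haK]
          linear_combination (2:ℂ)⁻¹ * h3
        rw [this]; exact d.2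
  have hSF : IsSplittingField ℚ ℚ⟮α⟯ p := by
    have h := IntermediateField.adjoin_rootSet_isSplittingField
      (IsAlgClosed.splits (p.map (algebraMap ℚ ℂ)))
    rwa [← hKeq] at h
  haveI := hSF
  have hnormal : Normal ℚ ℚ⟮α⟯ := Normal.of_isSplittingField p
  haveI := hnormal
  haveI hFD : FiniteDimensional ℚ ℚ⟮α⟯ := IntermediateField.adjoin.finiteDimensional hint
  haveI hgal : IsGalois ℚ ℚ⟮α⟯ := ⟨⟩
  have hcard4 := IsGalois.card_aut_eq_finrank ℚ ℚ⟮α⟯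
  rw [hfr] at hcard4
  have hncard : Nat.card (ℚ⟮α⟯ ≃ₐ[ℚ] ℚ⟮α⟯) = 4 := by
    exact hcard4
  -- construct the automorphism of order 4
  set pb := IntermediateField.adjoin.powerBasis hint with hpb
  have hbroot : aeval b (minpoly ℚ pb.gen) = 0 := by
    rw [hpb, IntermediateField.adjoin.powerBasis_gen]
    erw [IntermediateField.minpoly_gen]
    rw [hmin, map_mul, aeval_C]
    have hpb0 : aeval b p = 0 := by
      rw [hp]
      simp only [map_add, map_sub, map_mul, map_pow, aeval_X, map_ofNat]
      rw [hb]
      linear_combination ((53:ℚ⟮α⟯)/2 - (163/32)*a - (5667/128)*a^2 + (3337/128)*a^3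
        + (1441/128)*a^4 - (1961/128)*a^5 + (369/64)*a^6 - (31/32)*a^7 + (1/16)*a^8) * paK
    rw [hpb0, mul_zero]
  set φ := pb.lift b hbroot with hφ
  set σ : ℚ⟮α⟯ ≃ₐ[ℚ] ℚ⟮α⟯ := AlgEquiv.ofBijective φ (AlgHom.normal_bijective ℚ ℚ⟮α⟯ ℚ⟮α⟯ (h := hnormal) φ) with hσ
  have hgen : pb.gen = a := IntermediateField.adjoin.powerBasis_gen hint
  have hσa : σ a = b := by
    have h := pb.lift_gen b hbroot
    rw [hgen] at h
    exact h
  have hσb : σ b = c := by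
    rw [hb]
    simp only [map_div₀, map_sub, map_add, map_neg, map_mul, map_pow, map_ofNat, hσa]
    rw [hb, hc]
    linear_combination ((61:ℚ⟮α⟯)/16 - (249/128)*a - (45/32)*a^2 + (165/128)*a^3
      - (11/32)*a^4 + (1/32)*a^5) * paK
  have hba : b ≠ a := by
    intro h
    apply hcube (2*X^3 - 9*X^2 + 7*X + 12) (by compute_degree!)
    have h' := congrArg (algebraMap ℚ⟮α⟯ ℂ) h
    rw [hb] at h'
    simp only [map_div₀, map_sub, map_add, map_neg, map_mul, map_pow, map_ofNat, haK] at h'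
    simp only [map_add, map_sub, map_mul, map_pow, aeval_X, map_ofNat]
    have h4 : (-12 - 3*α + 9*α^2 - 2*α^3) = 4*α := by
      field_simp at h'
      linear_combination h'
    linear_combination -h4
  have hca : c ≠ a := by
    intro h
    apply hcube (2*X^3 - 5*X^2 - 11*X + 10) (by compute_degree!)
    have h' := congrArg (algebraMap ℚ⟮α⟯ ℂ) h
    rw [hc] at h'
    simp only [map_div₀, map_sub, map_add, map_neg, map_mul, map_pow, map_ofNat, haK] at h'
    simp only [map_add, map_sub, map_mul, map_pow, aeval_X, map_ofNat]
    have h4 : (10 - 7*α - 5*α^2 + 2*α^3) = 4*α := by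
      field_simp at h'
      linear_combination h'
    linear_combination h4
  have hσne1 : σ ≠ 1 := by
    intro h
    rw [h, AlgEquiv.one_apply] at hσa
    exact hba hσa.symm
  have hσσne1 : σ * σ ≠ 1 := by
    intro h
    have h2 : σ (σ a) = a := by rw [← AlgEquiv.mul_apply, h, AlgEquiv.one_apply]
    rw [hσa, hσb] at h2
    exact hca h2
  have hdvd : orderOf σ ∣ 4 := by rw [← hncard]; exact orderOf_dvd_natCard σ
  have hpos : 0 < orderOf σ := orderOf_pos σ
  have hne1 : orderOf σ ≠ 1 := fun h => hσne1 (orderOf_eq_one_iff.mp h)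
  have hne2 : orderOf σ ≠ 2 := by
    intro h
    apply hσσne1
    have := pow_orderOf_eq_one σ
    rwa [h, pow_two] at this
  have hne3 : orderOf σ ≠ 3 := by
    intro h
    rw [h] at hdvd
    norm_num at hdvd
  have h4 : orderOf σ = 4 := by
    have hle := Nat.le_of_dvd (by norm_num) hdvd
    omega
  exact ⟨hfr, hgal, isCyclic_of_orderOf_eq_card σ (by rw [h4]; exact hncard.symm), hncard⟩
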